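/- Let (X_n)_{n≥0} be a Markov chain absorbed at a cemetery state ∂ at time τ_∂, satisfying: (A1) there exist n₀ ∈ ℕ, c₁ > 0 and a probability measure ν on the survival set E such that P_x(X_{n₀} ∈ · | τ_∂ > n₀) ≥ c₁ ν for all x ∈ E; (A2) there exists c₂ > 0 such that P_ν(τ_∂ > n) ≥ c₂ P_x(τ_∂ > n) for all x ∈ E and n ∈ ℕ. Then for any two initial distributions μ₁, μ₂ on E and all n ≥ n₀: ‖P_{μ₁}(X_n ∈ · | τ_∂ > n) − P_{μ₂}(X_n ∈ · | τ_∂ > n)‖_TV ≤ 2(1 − c₁c₂)^{⌊n/n₀⌋}. -/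

import Mathlib

open MeasureTheory
open scoped ENNReal

namespace CVAux
variable {S : Type*} [MeasurableSpace S] [MeasurableSingletonClass S]

lemma aem_dirac (f : S → Measure S) (x : S) : AEMeasurable f (Measure.dirac x) :=
  ⟨fun _ => f x, measurable_const, by
    rw [Filter.EventuallyEq, ae_dirac_eq]; exact Filter.eventually_pure.2 rfl⟩

lemma dirac_bind' (f : S → Measure S) (x : S) : (Measure.dirac x).bind f = f x := by
  have h : f =ᵐ[Measure.dirac x] (fun _ => f x) := by
    rw [Filter.EventuallyEq, ae_dirac_eq]; exact Filter.eventually_pure.2 rfl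
  rw [Measure.bind, Measure.map_congr h, Measure.map_const]
  simp [Measure.join_dirac]

lemma bind_apply_ae {μ : Measure S} {f : S → Measure S} (hf : AEMeasurable f μ)
    {B : Set S} (hB : MeasurableSet B) : (μ.bind f) B = ∫⁻ x, f x B ∂μ := by
  rw [Measure.bind, Measure.map_congr hf.ae_eq_mk, ← Measure.bind,
    Measure.bind_apply hB hf.measurable_mk.aemeasurable]
  refine lintegral_congr_ae ?_
  filter_upwards [hf.ae_eq_mk] with x hx
  rw [hx]

lemma aem_of_bind_ne_zero {μ : Measure S} {f : S → Measure S} (h : μ.bind f ≠ 0) :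
    AEMeasurable f μ := by
  by_contra hc
  rw [Measure.bind, Measure.map_of_not_aemeasurable hc, Measure.join_zero] at h
  exact h rfl

lemma bind_congr_ae {μ : Measure S} {f g : S → Measure S} (h : f =ᵐ[μ] g) :
    μ.bind f = μ.bind g := by
  rw [Measure.bind, Measure.map_congr h, Measure.bind]

lemma bind_bind_ae {μ : Measure S} {f g : S → Measure S} (hf : AEMeasurable f μ)
    (hg : AEMeasurable g (μ.bind f)) :
    (μ.bind f).bind g = μ.bind (fun a => (f a).bind g) := by
  have hbf : μ.bind f = μ.bind (hf.mk f) := bind_congr_ae hf.ae_eq_mk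
  have hg' : AEMeasurable g (μ.bind (hf.mk f)) := hbf ▸ hg
  -- a measurable superset of {g ≠ g'}
  obtain ⟨N, hNsub, hNm, hN0⟩ := exists_measurable_superset_of_null hg'.ae_eq_mk
  have hN : ∫⁻ a, (hf.mk f) a N ∂μ = 0 := by
    rw [← Measure.bind_apply hNm hf.measurable_mk.aemeasurable]; exact hN0
  have hNae : ∀ᵐ a ∂μ, (hf.mk f) a N = 0 := by
    have hm : Measurable fun a => (hf.mk f) a N :=
      (Measure.measurable_coe hNm).comp hf.measurable_mk
    filter_upwards [(lintegral_eq_zero_iff hm).1 hN] with a ha using ha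
  have key : ∀ᵐ a ∂μ, (f a).bind g = ((hf.mk f) a).bind (hg'.mk g) := by
    filter_upwards [hf.ae_eq_mk, hNae] with a ha hNa
    have : g =ᵐ[f a] hg'.mk := by
      rw [ha]
      refine measure_mono_null ?_ hNa
      intro y hy
      exact hNsub hy
    rw [bind_congr_ae this, ha]
  calc (μ.bind f).bind g = (μ.bind (hf.mk f)).bind (hg'.mk g) := by
        rw [hbf, bind_congr_ae hg'.ae_eq_mk]
    _ = μ.bind (fun a => ((hf.mk f) a).bind (hg'.mk g)) :=
        Measure.bind_bind hf.measurable_mk.aemeasurable hg'.measurable_mk.aemeasurable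
    _ = μ.bind (fun a => (f a).bind g) := (bind_congr_ae key).symm

lemma lintegral_bind_ae {μ : Measure S} {f : S → Measure S} {φ : S → ℝ≥0∞}
    (hf : AEMeasurable f μ) (hφ : AEMeasurable φ (μ.bind f)) :
    ∫⁻ y, φ y ∂(μ.bind f) = ∫⁻ x, ∫⁻ y, φ y ∂(f x) ∂μ := by
  have hbf : μ.bind f = μ.bind (hf.mk f) := bind_congr_ae hf.ae_eq_mk
  have hφ' : AEMeasurable φ (μ.bind (hf.mk f)) := hbf ▸ hφ
  obtain ⟨N, hNsub, hNm, hN0⟩ := exists_measurable_superset_of_null hφ'.ae_eq_mk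
  have hN : ∫⁻ a, (hf.mk f) a N ∂μ = 0 := by
    rw [← Measure.bind_apply hNm hf.measurable_mk.aemeasurable]; exact hN0
  have hNae : ∀ᵐ a ∂μ, (hf.mk f) a N = 0 := by
    have hm : Measurable fun a => (hf.mk f) a N :=
      (Measure.measurable_coe hNm).comp hf.measurable_mk
    filter_upwards [(lintegral_eq_zero_iff hm).1 hN] with a ha using ha
  have key : ∀ᵐ a ∂μ, ∫⁻ y, φ y ∂(f a) = ∫⁻ y, (hφ'.mk φ) y ∂((hf.mk f) a) := by
    filter_upwards [hf.ae_eq_mk, hNae] with a ha hNa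
    have : φ =ᵐ[f a] hφ'.mk := by
      rw [ha]; exact measure_mono_null (fun y hy => hNsub hy) hNa
    rw [lintegral_congr_ae this, ha]
  calc ∫⁻ y, φ y ∂(μ.bind f) = ∫⁻ y, (hφ'.mk φ) y ∂(μ.bind (hf.mk f)) := by
        rw [hbf, lintegral_congr_ae hφ'.ae_eq_mk]
    _ = ∫⁻ a, ∫⁻ y, (hφ'.mk φ) y ∂((hf.mk f) a) ∂μ :=
        Measure.lintegral_bind hf.measurable_mk.aemeasurable hφ'.measurable_mk.aemeasurable
    _ = ∫⁻ a, ∫⁻ y, φ y ∂(f a) ∂μ := (lintegral_congr_ae key).symm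

lemma bind_add_ae {μ ν : Measure S} {f : S → Measure S} (hμ : AEMeasurable f μ)
    (hν : AEMeasurable f ν) : (μ + ν).bind f = μ.bind f + ν.bind f := by
  have h := hμ.add_measure hν
  have hbf : (μ + ν).bind f = (μ + ν).bind (h.mk f) := bind_congr_ae h.ae_eq_mk
  rw [hbf, Measure.bind, Measure.map_add _ _ h.measurable_mk]
  have : (Measure.map (h.mk f) μ + Measure.map (h.mk f) ν).join
      = (Measure.map (h.mk f) μ).join + (Measure.map (h.mk f) ν).join := by
    ext s hs
    simp [Measure.join_apply hs, lintegral_add_measure]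
  rw [this, ← Measure.bind, ← Measure.bind,
    ← bind_congr_ae (h.ae_eq_mk.filter_mono (ae_mono (Measure.le_add_right le_rfl))),
    ← bind_congr_ae (h.ae_eq_mk.filter_mono (ae_mono (Measure.le_add_left le_rfl)))]

lemma bind_smul_ae {μ : Measure S} {f : S → Measure S} (hμ : AEMeasurable f μ) (c : ℝ≥0∞) :
    (c • μ).bind f = c • (μ.bind f) := by
  have hbf : μ.bind f = μ.bind (hμ.mk f) := bind_congr_ae hμ.ae_eq_mk
  have h2 : (c • μ).bind f = (c • μ).bind (hμ.mk f) := by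
    exact bind_congr_ae (hμ.ae_eq_mk.filter_mono (Measure.ae_smul_measure_le c))
  ext s hs
  rw [hbf, h2, Measure.bind_apply hs hμ.measurable_mk.aemeasurable, lintegral_smul_measure,
    Measure.smul_apply, Measure.bind_apply hs hμ.measurable_mk.aemeasurable, smul_eq_mul]

end CVAux

namespace CVAux
section Law
variable {S : Type*} [MeasurableSpace S] [MeasurableSingletonClass S]

lemma aem_law (cem : S) (law : ℕ → S → Measure S)
    (hsurv : ∀ (n : ℕ) (μ : Measure S), IsProbabilityMeasure μ → μ {cem} = 0 →
      0 < (μ.bind (law n)) {cem}ᶜ)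
    (σ : Measure S) (hσ : σ Set.univ ≠ ⊤) (m : ℕ) : AEMeasurable (law m) σ := by
  have hdec : σ.restrict {cem} + σ.restrict {cem}ᶜ = σ :=
    Measure.restrict_add_restrict_compl (measurableSet_singleton cem)
  have h1 : AEMeasurable (law m) (σ.restrict {cem}) := by
    rw [Measure.restrict_singleton]
    exact (aem_dirac (law m) cem).smul_measure _
  have h2 : AEMeasurable (law m) (σ.restrict {cem}ᶜ) := by
    rcases eq_or_ne (σ {cem}ᶜ) 0 with h | h
    · rw [Measure.restrict_eq_zero.2 h]; exact aemeasurable_zero_measure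
    · have hfin : σ {cem}ᶜ ≠ ⊤ := ne_top_of_le_ne_top hσ (measure_mono (Set.subset_univ _))
      set μ' := (σ {cem}ᶜ)⁻¹ • σ.restrict {cem}ᶜ with hμ'
      have hp : IsProbabilityMeasure μ' := by
        constructor
        rw [hμ', Measure.smul_apply, Measure.restrict_apply MeasurableSet.univ,
          Set.univ_inter, smul_eq_mul, ENNReal.inv_mul_cancel h hfin]
      have hc : μ' {cem} = 0 := by
        rw [hμ', Measure.smul_apply, Measure.restrict_apply (measurableSet_singleton cem)]
        simp [Set.inter_compl_self]
      have hpos := hsurv m μ' hp hc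
      have haem : AEMeasurable (law m) μ' := by
        refine aem_of_bind_ne_zero fun h0 => ?_
        rw [h0] at hpos; simp at hpos
      have hsm := haem.smul_measure (σ {cem}ᶜ)
      rwa [hμ', smul_smul, ENNReal.mul_inv_cancel h hfin, one_smul] at hsm
  rw [← hdec]; exact h1.add_measure h2

lemma K_eq_law_one (K : S → Measure S) (law : ℕ → S → Measure S)
    (hlaw0 : ∀ x, law 0 x = Measure.dirac x)
    (hlawS : ∀ n x, law (n+1) x = (law n x).bind K) : K = law 1 :=
  funext fun y => by rw [hlawS 0 y, hlaw0, dirac_bind']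

lemma prob_law (cem : S) (K : S → Measure S) [∀ x, IsProbabilityMeasure (K x)]
    (law : ℕ → S → Measure S)
    (hlaw0 : ∀ x, law 0 x = Measure.dirac x)
    (hlawS : ∀ n x, law (n+1) x = (law n x).bind K)
    (hsurv : ∀ (n : ℕ) (μ : Measure S), IsProbabilityMeasure μ → μ {cem} = 0 →
      0 < (μ.bind (law n)) {cem}ᶜ) :
    ∀ n x, IsProbabilityMeasure (law n x) := by
  intro n
  induction n with
  | zero => intro x; rw [hlaw0]; infer_instance
  | succ n ih =>
    intro x
    rw [hlawS]
    have hfin : (law n x) Set.univ ≠ ⊤ := by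
      rw [(ih x).measure_univ]; exact ENNReal.one_ne_top
    have hK : AEMeasurable K (law n x) := by
      rw [K_eq_law_one K law hlaw0 hlawS]
      exact aem_law cem law hsurv _ hfin 1
    constructor
    rw [bind_apply_ae hK MeasurableSet.univ]
    calc ∫⁻ y, (K y) Set.univ ∂(law n x) = ∫⁻ _, 1 ∂(law n x) :=
          lintegral_congr fun y => measure_univ
      _ = 1 := by rw [lintegral_one, (ih x).measure_univ]

lemma law_cem (cem : S) (K : S → Measure S) (law : ℕ → S → Measure S)
    (hlaw0 : ∀ x, law 0 x = Measure.dirac x)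
    (hlawS : ∀ n x, law (n+1) x = (law n x).bind K)
    (habs : K cem = Measure.dirac cem) :
    ∀ n, law n cem = Measure.dirac cem := by
  intro n
  induction n with
  | zero => exact hlaw0 cem
  | succ n ih => rw [hlawS, ih, dirac_bind', habs]

lemma sg_pt (cem : S) (K : S → Measure S) [∀ x, IsProbabilityMeasure (K x)]
    (law : ℕ → S → Measure S)
    (hlaw0 : ∀ x, law 0 x = Measure.dirac x)
    (hlawS : ∀ n x, law (n+1) x = (law n x).bind K)
    (hsurv : ∀ (n : ℕ) (μ : Measure S), IsProbabilityMeasure μ → μ {cem} = 0 →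
      0 < (μ.bind (law n)) {cem}ᶜ) :
    ∀ (a b : ℕ) (x : S), law (a + b) x = (law a x).bind (law b) := by
  intro a b
  induction b with
  | zero =>
    intro x
    have h0 : law 0 = Measure.dirac := funext hlaw0
    rw [Nat.add_zero, h0, Measure.bind_dirac]
  | succ b ih =>
    intro x
    have hfa : (law a x) Set.univ ≠ ⊤ := by
      rw [(prob_law cem K law hlaw0 hlawS hsurv a x).measure_univ]; exact ENNReal.one_ne_top
    have hf : AEMeasurable (law b) (law a x) := aem_law cem law hsurv _ hfa b
    have hbindfin : ((law a x).bind (law b)) Set.univ ≠ ⊤ := by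
      rw [bind_apply_ae hf MeasurableSet.univ]
      have heq : ∫⁻ y, (law b y) Set.univ ∂(law a x) = ∫⁻ _, 1 ∂(law a x) :=
        lintegral_congr fun y => (prob_law cem K law hlaw0 hlawS hsurv b y).measure_univ
      rw [heq, lintegral_one, (prob_law cem K law hlaw0 hlawS hsurv a x).measure_univ]
      exact ENNReal.one_ne_top
    have hg : AEMeasurable K ((law a x).bind (law b)) := by
      rw [K_eq_law_one K law hlaw0 hlawS]
      exact aem_law cem law hsurv _ hbindfin 1
    have harith : a + (b + 1) = (a + b) + 1 := by ring
    rw [harith, hlawS, ih, bind_bind_ae hf hg]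
    exact bind_congr_ae (Filter.Eventually.of_forall fun y => (hlawS b y).symm)

lemma bind_mass (cem : S) (K : S → Measure S) [∀ x, IsProbabilityMeasure (K x)]
    (law : ℕ → S → Measure S)
    (hlaw0 : ∀ x, law 0 x = Measure.dirac x)
    (hlawS : ∀ n x, law (n+1) x = (law n x).bind K)
    (hsurv : ∀ (n : ℕ) (μ : Measure S), IsProbabilityMeasure μ → μ {cem} = 0 →
      0 < (μ.bind (law n)) {cem}ᶜ)
    (σ : Measure S) (hσ : σ Set.univ ≠ ⊤) (a : ℕ) :
    (σ.bind (law a)) Set.univ = σ Set.univ := by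
  rw [bind_apply_ae (aem_law cem law hsurv σ hσ a) MeasurableSet.univ]
  have heq : ∫⁻ y, (law a y) Set.univ ∂σ = ∫⁻ _, 1 ∂σ :=
    lintegral_congr fun y => (prob_law cem K law hlaw0 hlawS hsurv a y).measure_univ
  rw [heq, lintegral_one]

lemma sg_bind (cem : S) (K : S → Measure S) [∀ x, IsProbabilityMeasure (K x)]
    (law : ℕ → S → Measure S)
    (hlaw0 : ∀ x, law 0 x = Measure.dirac x)
    (hlawS : ∀ n x, law (n+1) x = (law n x).bind K)
    (hsurv : ∀ (n : ℕ) (μ : Measure S), IsProbabilityMeasure μ → μ {cem} = 0 →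
      0 < (μ.bind (law n)) {cem}ᶜ)
    (σ : Measure S) (hσ : σ Set.univ ≠ ⊤) (a b : ℕ) :
    σ.bind (law (a + b)) = (σ.bind (law a)).bind (law b) := by
  have h1 : law (a + b) = fun x => (law a x).bind (law b) :=
    funext fun x => sg_pt cem K law hlaw0 hlawS hsurv a b x
  have hfin : (σ.bind (law a)) Set.univ ≠ ⊤ := by
    rw [bind_mass cem K law hlaw0 hlawS hsurv σ hσ a]; exact hσ
  rw [h1, ← bind_bind_ae (aem_law cem law hsurv σ hσ a) (aem_law cem law hsurv _ hfin b)]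

end Law
end CVAux

/-- Champagnat–Villemonais criterion for a discrete-time absorbed Markov chain.
The chain has transition law `K`, absorbed at the cemetery point `cem` (so survival up to
time `n` is the event `X_n ≠ cem`, and `law n x` is the law of `X_n` starting from `x`).
Under the minorization condition (A1) and the survival-comparison condition (A2), for any
two initial distributions `μ₁, μ₂` supported on the survival set and any `n ≥ n₀`, the
conditioned laws at time `n` are within total variation `2(1 − c₁c₂)^{⌊n/n₀⌋}`. -/
theorem stmt5 {S : Type*} [MeasurableSpace S] [MeasurableSingletonClass S]
    (cem : S) (K : S → Measure S) [∀ x, IsProbabilityMeasure (K x)]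
    (law : ℕ → S → Measure S)
    (hlaw0 : ∀ x, law 0 x = Measure.dirac x)
    (hlawS : ∀ n x, law (n+1) x = (law n x).bind K)
    (habs : K cem = Measure.dirac cem)
    (n₀ : ℕ) (hn₀ : 0 < n₀) (c₁ c₂ : ℝ) (hc₁ : 0 < c₁) (hc₂ : 0 < c₂)
    (ν : Measure S) [IsProbabilityMeasure ν] (hν : ν {cem} = 0)
    (hsurv : ∀ (n : ℕ) (μ : Measure S), IsProbabilityMeasure μ → μ {cem} = 0 →
      0 < (μ.bind (law n)) {cem}ᶜ)
    (hA1 : ∀ x, x ≠ cem → ∀ B : Set S, MeasurableSet B →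
      ENNReal.ofReal c₁ * ν B * (law n₀ x) {cem}ᶜ ≤ (law n₀ x) (B ∩ {cem}ᶜ))
    (hA2 : ∀ x, x ≠ cem → ∀ n : ℕ,
      ENNReal.ofReal c₂ * (law n x) {cem}ᶜ ≤ (ν.bind (law n)) {cem}ᶜ) :
    ∀ μ₁ μ₂ : Measure S, IsProbabilityMeasure μ₁ → IsProbabilityMeasure μ₂ →
      μ₁ {cem} = 0 → μ₂ {cem} = 0 → ∀ n : ℕ, n₀ ≤ n → ∀ B : Set S, MeasurableSet B →
      |((μ₁.bind (law n)) (B ∩ {cem}ᶜ)).toReal / ((μ₁.bind (law n)) {cem}ᶜ).toReal -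
        ((μ₂.bind (law n)) (B ∩ {cem}ᶜ)).toReal / ((μ₂.bind (law n)) {cem}ᶜ).toReal| ≤
      2 * (1 - c₁*c₂) ^ (n / n₀) := by
  intro μ₁ μ₂ hp₁ hp₂ hz₁ hz₂ n _hn B hB
  classical
  set E : Set S := {cem}ᶜ with hEdef
  have hE : MeasurableSet E := (measurableSet_singleton cem).compl
  have aem := CVAux.aem_law cem law hsurv
  have probl := CVAux.prob_law cem K law hlaw0 hlawS hsurv
  have sgb := CVAux.sg_bind cem K law hlaw0 hlawS hsurv
  have bmass := CVAux.bind_mass cem K law hlaw0 hlawS hsurv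
  have lcem := CVAux.law_cem cem K law hlaw0 hlawS habs
  have honet : ∀ (m : ℕ) (x : S), (law m x) Set.univ ≠ ⊤ := fun m x => by
    rw [(probl m x).measure_univ]; exact ENNReal.one_ne_top
  have hlawle1 : ∀ (m : ℕ) (x : S), (law m x) E ≤ 1 := fun m x => by
    rw [← (probl m x).measure_univ]; exact measure_mono (Set.subset_univ _)
  have hcemE : ∀ m : ℕ, (law m cem) E = 0 := fun m => by
    rw [lcem m, Measure.dirac_apply' _ hE]
    exact Set.indicator_of_notMem (by simp [hEdef]) _
  have hμ₁fin : μ₁ Set.univ ≠ ⊤ := by rw [hp₁.measure_univ]; exact ENNReal.one_ne_top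
  have hμ₂fin : μ₂ Set.univ ≠ ⊤ := by rw [hp₂.measure_univ]; exact ENNReal.one_ne_top
  have hνfin : ν Set.univ ≠ ⊤ := by rw [measure_univ]; exact ENNReal.one_ne_top
  have hDle : ∀ (m : ℕ) (μ : Measure S), μ Set.univ ≠ ⊤ →
      (μ.bind (law m)) E ≤ μ Set.univ := by
    intro m μ hμ
    calc (μ.bind (law m)) E ≤ (μ.bind (law m)) Set.univ := measure_mono (Set.subset_univ _)
      _ = μ Set.univ := bmass μ hμ m
  set D₁ := (μ₁.bind (law n)) E with hD₁def
  set D₂ := (μ₂.bind (law n)) E with hD₂def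
  have hD₁0 : D₁ ≠ 0 := (hsurv n μ₁ hp₁ hz₁).ne'
  have hD₂0 : D₂ ≠ 0 := (hsurv n μ₂ hp₂ hz₂).ne'
  have hD₁t : D₁ ≠ ⊤ :=
    ne_top_of_le_ne_top hμ₁fin (by rw [hD₁def]; exact hDle n μ₁ hμ₁fin)
  have hD₂t : D₂ ≠ ⊤ :=
    ne_top_of_le_ne_top hμ₂fin (by rw [hD₂def]; exact hDle n μ₂ hμ₂fin)
  -- c₁ ≤ 1 and c₂ ≤ 1
  have hνE : ν E = 1 := by
    rw [hEdef, prob_compl_eq_one_sub (measurableSet_singleton cem), hν, tsub_zero]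
  obtain ⟨x₀, hx₀E⟩ : E.Nonempty :=
    nonempty_of_measure_ne_zero (by rw [hνE]; exact one_ne_zero)
  have hx₀ : x₀ ≠ cem := by simpa [hEdef] using hx₀E
  have hdx : (Measure.dirac x₀) {cem} = 0 := by
    rw [Measure.dirac_apply' _ (measurableSet_singleton cem)]
    exact Set.indicator_of_notMem (by simp [hx₀]) _
  have hlawx : (law n₀ x₀) E ≠ 0 := by
    have h := hsurv n₀ (Measure.dirac x₀) (by infer_instance) hdx
    rw [CVAux.dirac_bind'] at h
    exact h.ne'
  have hlawxt : (law n₀ x₀) E ≠ ⊤ :=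
    ne_top_of_le_ne_top (honet n₀ x₀) (measure_mono (Set.subset_univ _))
  have hc₁1 : c₁ ≤ 1 := by
    have h := hA1 x₀ hx₀ Set.univ MeasurableSet.univ
    rw [Set.univ_inter, measure_univ, mul_one] at h
    refine ENNReal.ofReal_le_one.1 ?_
    exact (ENNReal.mul_le_mul_iff_left hlawx hlawxt).1 (by rw [one_mul]; exact h)
  have hc₂1 : c₂ ≤ 1 := by
    have h := hA2 x₀ hx₀ 0
    have h0 : law 0 = Measure.dirac := funext hlaw0
    rw [hlaw0, h0, Measure.bind_dirac, hνE, Measure.dirac_apply' _ hE,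
      Set.indicator_of_mem hx₀E, Pi.one_apply, mul_one] at h
    exact ENNReal.ofReal_le_one.1 h
  have hcc1 : c₁ * c₂ ≤ 1 := by nlinarith
  set p : ℝ≥0∞ := ENNReal.ofReal c₁ * ENNReal.ofReal c₂ with hpdef
  set γ : ℝ≥0∞ := 1 - p with hγdef
  have hγr : γ = ENNReal.ofReal (1 - c₁*c₂) := by
    rw [ENNReal.ofReal_sub _ (by positivity), ENNReal.ofReal_one, hγdef, hpdef,
      ENNReal.ofReal_mul hc₁.le]
  have hγ1 : γ ≤ 1 := tsub_le_self
  have hγpow : ∀ j : ℕ, γ ^ j ≤ 1 := fun j => pow_le_one' hγ1 j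
  have htle : ∀ m' : ℕ, (ν.bind (law m')) E ≤ 1 := fun m' => by
    rw [← measure_univ (μ := ν)]; exact hDle m' ν hνfin
  -- pointwise consequence of (A2)
  have hP1 : ∀ (m' : ℕ) (x : S), ENNReal.ofReal c₂ * (law (n₀ + m') x) E ≤
      ((ν.bind (law m')) E) * (law n₀ x) E := by
    intro m' x
    have hsg : (law (n₀ + m') x) E = ∫⁻ y, (law m' y) E ∂(law n₀ x) := by
      rw [CVAux.sg_pt cem K law hlaw0 hlawS hsurv n₀ m' x,
        CVAux.bind_apply_ae (aem _ (honet n₀ x) m') hE]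
    rw [hsg, ← lintegral_const_mul' _ _ ENNReal.ofReal_ne_top]
    have hdec : (law n₀ x).restrict {cem} + (law n₀ x).restrict E = law n₀ x :=
      Measure.restrict_add_restrict_compl (measurableSet_singleton cem)
    conv_lhs => rw [← hdec]
    rw [lintegral_add_measure]
    have hterm1 : ∫⁻ y, ENNReal.ofReal c₂ * (law m' y) E ∂((law n₀ x).restrict {cem}) = 0 := by
      rw [Measure.restrict_singleton, lintegral_smul_measure, lintegral_dirac,
        hcemE m', mul_zero, smul_zero]
    rw [hterm1, zero_add]
    have hbound : ∫⁻ y, ENNReal.ofReal c₂ * (law m' y) E ∂((law n₀ x).restrict E) ≤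
        ∫⁻ _, (ν.bind (law m')) E ∂((law n₀ x).restrict E) := by
      refine lintegral_mono_ae ?_
      rw [ae_restrict_iff' hE]
      exact Filter.Eventually.of_forall fun y hy => hA2 y hy m'
    refine le_trans hbound ?_
    rw [lintegral_const, Measure.restrict_apply_univ]
  -- integrated consequence of (A1)
  have hMin : ∀ (β : Measure S), β Set.univ ≠ ⊤ → ∀ A : Set S, MeasurableSet A →
      ENNReal.ofReal c₁ * ν A * (∫⁻ x, (law n₀ x) E ∂β) ≤ (β.bind (law n₀)) (A ∩ E) := by
    intro β hβ A hA
    rw [CVAux.bind_apply_ae (aem β hβ n₀) (hA.inter hE)]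
    have hpt : ∀ x, ENNReal.ofReal c₁ * ν A * (law n₀ x) E ≤ (law n₀ x) (A ∩ E) := by
      intro x
      by_cases hx : x = cem
      · subst hx; rw [hcemE n₀, mul_zero]; exact zero_le
      · exact hA1 x hx A hA
    calc ENNReal.ofReal c₁ * ν A * ∫⁻ x, (law n₀ x) E ∂β
        = ∫⁻ x, ENNReal.ofReal c₁ * ν A * (law n₀ x) E ∂β := by
          rw [lintegral_const_mul' _ _ (ENNReal.mul_ne_top ENNReal.ofReal_ne_top
            (ne_top_of_le_ne_top ENNReal.one_ne_top prob_le_one))]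
      _ ≤ ∫⁻ x, (law n₀ x) (A ∩ E) ∂β := lintegral_mono hpt
  set r := n % n₀ with hrdef
  set q := n / n₀ with hqdef
  have hqr : r + q * n₀ = n := Nat.mod_add_div' n n₀
  -- the key induction
  have key : ∀ j, j ≤ q → ∃ κ β₁ β₂ : Measure S,
      D₁⁻¹ • (μ₁.bind (law (r + j*n₀))) = κ + β₁ ∧
      D₂⁻¹ • (μ₂.bind (law (r + j*n₀))) = κ + β₂ ∧
      (∫⁻ x, (law ((q-j)*n₀) x) E ∂β₁) = (∫⁻ x, (law ((q-j)*n₀) x) E ∂β₂) ∧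
      (∫⁻ x, (law ((q-j)*n₀) x) E ∂β₁) ≤ γ^j := by
    intro j
    induction j with
    | zero =>
      intro _
      have hmass : ∀ (μ : Measure S), μ Set.univ ≠ ⊤ → μ Set.univ = 1 →
          ∫⁻ x, (law ((q-0)*n₀) x) E ∂(μ.bind (law r)) = (μ.bind (law n)) E := by
        intro μ hμ hμ1
        have hfin : (μ.bind (law r)) Set.univ ≠ ⊤ := by rw [bmass μ hμ r]; exact hμ
        rw [← CVAux.bind_apply_ae (aem _ hfin ((q-0)*n₀)) hE, ← sgb μ hμ r ((q-0)*n₀)]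
        have : r + (q - 0) * n₀ = n := by simpa using hqr
        rw [this]
      refine ⟨0, D₁⁻¹ • (μ₁.bind (law (r + 0*n₀))), D₂⁻¹ • (μ₂.bind (law (r + 0*n₀))),
        (zero_add _).symm, (zero_add _).symm, ?_, ?_⟩
      · rw [show r + 0*n₀ = r by ring, lintegral_smul_measure, lintegral_smul_measure,
          hmass μ₁ hμ₁fin hp₁.measure_univ, hmass μ₂ hμ₂fin hp₂.measure_univ,
          ← hD₁def, ← hD₂def, smul_eq_mul, smul_eq_mul, ENNReal.inv_mul_cancel hD₁0 hD₁t,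
          ENNReal.inv_mul_cancel hD₂0 hD₂t]
      · rw [show r + 0*n₀ = r by ring, lintegral_smul_measure,
          hmass μ₁ hμ₁fin hp₁.measure_univ, ← hD₁def,
          smul_eq_mul, ENNReal.inv_mul_cancel hD₁0 hD₁t, pow_zero]
    | succ j ih =>
      intro hjq
      obtain ⟨κ, β₁, β₂, h1, h2, hMeq, hMle⟩ := ih (le_trans (Nat.le_succ j) hjq)
      set kj := r + j*n₀ with hkjdef
      set m' := (q - (j+1))*n₀ with hm'def
      set mm := (q - j)*n₀ with hmmdef
      have hmm' : mm = n₀ + m' := by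
        have hq1 : q - j = (q - (j+1)) + 1 := by omega
        rw [hmmdef, hm'def, hq1]; ring
      have hk1 : r + (j+1)*n₀ = kj + n₀ := by rw [hkjdef]; ring
      have hσ₁fin : (μ₁.bind (law kj)) Set.univ ≠ ⊤ := by rw [bmass μ₁ hμ₁fin kj]; exact hμ₁fin
      have hσ₂fin : (μ₂.bind (law kj)) Set.univ ≠ ⊤ := by rw [bmass μ₂ hμ₂fin kj]; exact hμ₂fin
      have hu₁fin : (D₁⁻¹ • (μ₁.bind (law kj))) Set.univ ≠ ⊤ := by
        rw [Measure.smul_apply, smul_eq_mul, bmass μ₁ hμ₁fin kj, hp₁.measure_univ, mul_one]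
        exact ENNReal.inv_ne_top.2 hD₁0
      have hu₂fin : (D₂⁻¹ • (μ₂.bind (law kj))) Set.univ ≠ ⊤ := by
        rw [Measure.smul_apply, smul_eq_mul, bmass μ₂ hμ₂fin kj, hp₂.measure_univ, mul_one]
        exact ENNReal.inv_ne_top.2 hD₂0
      have hβ₁fin : β₁ Set.univ ≠ ⊤ :=
        ne_top_of_le_ne_top hu₁fin (by rw [h1, Measure.add_apply]; exact le_add_self)
      have hβ₂fin : β₂ Set.univ ≠ ⊤ :=
        ne_top_of_le_ne_top hu₂fin (by rw [h2, Measure.add_apply]; exact le_add_self)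
      have hκfin : κ Set.univ ≠ ⊤ :=
        ne_top_of_le_ne_top hu₁fin (by rw [h1, Measure.add_apply]; exact le_self_add)
      set e₁ := ∫⁻ x, (law n₀ x) E ∂β₁ with he₁def
      set e₂ := ∫⁻ x, (law n₀ x) E ∂β₂ with he₂def
      set e := e₁ ⊓ e₂ with hedef
      set cc := ENNReal.ofReal c₁ * e with hccdef
      set t := (ν.bind (law m')) E with htdef
      have he₁t : e₁ ≠ ⊤ := by
        refine ne_top_of_le_ne_top hβ₁fin ?_
        calc e₁ ≤ ∫⁻ _, 1 ∂β₁ := lintegral_mono fun x => hlawle1 n₀ x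
          _ = β₁ Set.univ := lintegral_one
      have het : e ≠ ⊤ := ne_top_of_le_ne_top he₁t (min_le_left _ _)
      have hcct : cc ≠ ⊤ := ENNReal.mul_ne_top ENNReal.ofReal_ne_top het
      haveI : IsFiniteMeasure (cc • ν) := by
        constructor
        rw [Measure.smul_apply, smul_eq_mul, measure_univ, mul_one]
        exact lt_top_iff_ne_top.2 hcct
      have hle : ∀ (β : Measure S), β Set.univ ≠ ⊤ → e ≤ ∫⁻ x, (law n₀ x) E ∂β →
          cc • ν ≤ β.bind (law n₀) := by
        intro β hβfin heβ
        rw [Measure.le_iff]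
        intro A hA
        calc (cc • ν) A = ENNReal.ofReal c₁ * e * ν A := by
              rw [Measure.smul_apply, smul_eq_mul, hccdef]
          _ ≤ ENNReal.ofReal c₁ * (∫⁻ x, (law n₀ x) E ∂β) * ν A := by
              gcongr
          _ = ENNReal.ofReal c₁ * ν A * (∫⁻ x, (law n₀ x) E ∂β) := by ring
          _ ≤ (β.bind (law n₀)) (A ∩ E) := hMin β hβfin A hA
          _ ≤ (β.bind (law n₀)) A := measure_mono Set.inter_subset_left
      have hle1 : cc • ν ≤ β₁.bind (law n₀) :=
        hle β₁ hβ₁fin (by rw [← he₁def]; exact min_le_left _ _)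
      have hle2 : cc • ν ≤ β₂.bind (law n₀) :=
        hle β₂ hβ₂fin (by rw [← he₂def]; exact min_le_right _ _)
      set β₁' := β₁.bind (law n₀) - cc • ν with hβ₁'def
      set β₂' := β₂.bind (law n₀) - cc • ν with hβ₂'def
      have hsub1 : β₁' + cc • ν = β₁.bind (law n₀) := Measure.sub_add_cancel_of_le hle1
      have hsub2 : β₂' + cc • ν = β₂.bind (law n₀) := Measure.sub_add_cancel_of_le hle2
      set κ' := κ.bind (law n₀) + cc • ν with hκ'def
      have hdecomp : ∀ (μ : Measure S) (D : ℝ≥0∞) (β β' : Measure S),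
          μ Set.univ ≠ ⊤ → β Set.univ ≠ ⊤ →
          D⁻¹ • (μ.bind (law kj)) = κ + β → β' + cc • ν = β.bind (law n₀) →
          D⁻¹ • (μ.bind (law (r + (j+1)*n₀))) = κ' + β' := by
        intro μ D β β' hμfin hβfin hdec hsub
        have hσfin : (μ.bind (law kj)) Set.univ ≠ ⊤ := by rw [bmass μ hμfin kj]; exact hμfin
        have hbig : μ.bind (law (kj + n₀)) = (μ.bind (law kj)).bind (law n₀) :=
          sgb μ hμfin kj n₀
        have hsmul : D⁻¹ • ((μ.bind (law kj )).bind (law n₀)) =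
            (D⁻¹ • (μ.bind (law kj))).bind (law n₀) :=
          (CVAux.bind_smul_ae (aem _ hσfin n₀) _).symm
        rw [hk1, hbig, hsmul, hdec,
          CVAux.bind_add_ae (aem κ hκfin n₀) (aem β hβfin n₀), ← hsub, hκ'def]
        abel
      have hdec1 := hdecomp μ₁ D₁ β₁ β₁' hμ₁fin hβ₁fin h1 hsub1
      have hdec2 := hdecomp μ₂ D₂ β₂ β₂' hμ₂fin hβ₂fin h2 hsub2
      -- masses
      have ht' : t = ∫⁻ y, (law m' y) E ∂ν := by
        rw [htdef, CVAux.bind_apply_ae (aem ν hνfin m') hE]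
      have hXmass : ∀ (β : Measure S), β Set.univ ≠ ⊤ →
          ∫⁻ x, (law mm x) E ∂β = ∫⁻ y, (law m' y) E ∂(β.bind (law n₀)) := by
        intro β hβ
        have hbfin : (β.bind (law n₀)) Set.univ ≠ ⊤ := by rw [bmass β hβ n₀]; exact hβ
        rw [← CVAux.bind_apply_ae (aem β hβ mm) hE, hmm', sgb β hβ n₀ m',
          CVAux.bind_apply_ae (aem _ hbfin m') hE]
      have httop : t ≠ ⊤ := ne_top_of_le_ne_top ENNReal.one_ne_top (htle m')
      have hcctt : cc * t ≠ ⊤ := ENNReal.mul_ne_top hcct httop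
      have hmass : ∀ (β β' : Measure S), β Set.univ ≠ ⊤ →
          β' + cc • ν = β.bind (law n₀) →
          ∫⁻ y, (law m' y) E ∂β' = (∫⁻ x, (law mm x) E ∂β) - cc * t := by
        intro β β' hβ hsub
        refine ENNReal.eq_sub_of_add_eq hcctt ?_
        rw [hXmass β hβ, ← hsub, lintegral_add_measure, lintegral_smul_measure, smul_eq_mul, ← ht']
      have hmass1 := hmass β₁ β₁' hβ₁fin hsub1
      have hmass2 := hmass β₂ β₂' hβ₂fin hsub2
      set M := ∫⁻ x, (law mm x) E ∂β₁ with hMdef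
      have hMt : M ≠ ⊤ := ne_top_of_le_ne_top ENNReal.one_ne_top (le_trans hMle (hγpow j))
      -- ofReal c₂ * M ≤ t * e
      have hc₂M : ∀ (β : Measure S), ENNReal.ofReal c₂ * (∫⁻ x, (law mm x) E ∂β) ≤
          t * ∫⁻ x, (law n₀ x) E ∂β := by
        intro β
        rw [← lintegral_const_mul' _ _ ENNReal.ofReal_ne_top,
          ← lintegral_const_mul' _ _ httop]
        refine lintegral_mono fun x => ?_
        rw [hmm']; exact hP1 m' x
      have hc₂M' : ENNReal.ofReal c₂ * M ≤ t * e := by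
        rcases le_total e₁ e₂ with h | h
        · rw [hedef, inf_eq_left.2 h]; exact hc₂M β₁
        · rw [hedef, inf_eq_right.2 h, hMeq]; exact hc₂M β₂
      have hkey : p * M ≤ cc * t := by
        calc p * M = ENNReal.ofReal c₁ * (ENNReal.ofReal c₂ * M) := by rw [hpdef]; ring
          _ ≤ ENNReal.ofReal c₁ * (t * e) := mul_le_mul_right hc₂M' _
          _ = cc * t := by rw [hccdef]; ring
      have hγM : γ * M = M - p * M := by
        rw [hγdef, ENNReal.sub_mul (fun _ _ => hMt), one_mul]
      have hbound : ∫⁻ y, (law m' y) E ∂β₁' ≤ γ ^ (j+1) := by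
        calc ∫⁻ y, (law m' y) E ∂β₁' = M - cc * t := hmass1
          _ ≤ M - p * M := tsub_le_tsub_left hkey M
          _ = γ * M := hγM.symm
          _ ≤ γ * γ ^ j := mul_le_mul_right hMle γ
          _ = γ ^ (j+1) := by rw [pow_succ, mul_comm]
      have hmeq' : ∫⁻ y, (law m' y) E ∂β₁' = ∫⁻ y, (law m' y) E ∂β₂' := by
        rw [hmass1, hmass2, hMeq]
      exact ⟨κ', β₁', β₂', hdec1, hdec2, hmeq', hbound⟩
  -- extract at j = q
  obtain ⟨κ, β₁, β₂, h1, h2, hMeq, hMle⟩ := key q le_rfl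
  rw [hqr] at h1 h2
  have hq0 : (q - q) * n₀ = 0 := by simp
  rw [hq0] at hMeq hMle
  -- β i (B ∩ E) ≤ γ ^ q
  have hind : ∀ x, (B ∩ E).indicator (1 : S → ℝ≥0∞) x ≤ (law 0 x) E := by
    intro x
    by_cases hx : x ∈ B ∩ E
    · rw [Set.indicator_of_mem hx, hlaw0, Measure.dirac_apply' _ hE,
        Set.indicator_of_mem hx.2]
    · rw [Set.indicator_of_notMem hx]; exact zero_le
  have hβle : ∀ β : Measure S, (∫⁻ x, (law 0 x) E ∂β) ≤ γ^q → β (B ∩ E) ≤ γ^q := by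
    intro β hβ
    calc β (B ∩ E) = ∫⁻ x, (B ∩ E).indicator 1 x ∂β :=
          (lintegral_indicator_one (hB.inter hE)).symm
      _ ≤ ∫⁻ x, (law 0 x) E ∂β := lintegral_mono hind
      _ ≤ γ^q := hβ
  have hβ₁le : β₁ (B ∩ E) ≤ γ^q := hβle β₁ hMle
  have hβ₂le : β₂ (B ∩ E) ≤ γ^q := hβle β₂ (by rw [← hMeq]; exact hMle)
  have hγqtop : γ^q ≠ ⊤ := ne_top_of_le_ne_top ENNReal.one_ne_top (hγpow q)
  -- value identities
  have hval : ∀ (μ : Measure S) (D : ℝ≥0∞) (β : Measure S),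
      D⁻¹ • (μ.bind (law n)) = κ + β →
      D⁻¹ * ((μ.bind (law n)) (B ∩ E)) = κ (B ∩ E) + β (B ∩ E) := by
    intro μ D β h
    have := congrArg (fun m : Measure S => m (B ∩ E)) h
    simpa [Measure.smul_apply, smul_eq_mul, Measure.add_apply] using this
  have hval1 := hval μ₁ D₁ β₁ h1
  have hval2 := hval μ₂ D₂ β₂ h2
  have hκt : κ (B ∩ E) ≠ ⊤ := by
    refine ne_top_of_le_ne_top ?_ (le_trans (le_self_add) (le_of_eq hval1.symm))
    exact ENNReal.mul_ne_top (ENNReal.inv_ne_top.2 hD₁0)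
      (ne_top_of_le_ne_top hD₁t (measure_mono Set.inter_subset_right))
  have hβ₁t : β₁ (B ∩ E) ≠ ⊤ := ne_top_of_le_ne_top hγqtop hβ₁le
  have hβ₂t : β₂ (B ∩ E) ≠ ⊤ := ne_top_of_le_ne_top hγqtop hβ₂le
  have hdiv : ∀ (μ : Measure S) (D : ℝ≥0∞),
      ((μ.bind (law n)) (B ∩ E)).toReal / D.toReal = (D⁻¹ * ((μ.bind (law n)) (B ∩ E))).toReal := by
    intro μ D
    rw [← ENNReal.toReal_div, ENNReal.div_eq_inv_mul]
  rw [hEdef] at *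
  rw [hdiv μ₁ D₁, hdiv μ₂ D₂, hval1, hval2,
    ENNReal.toReal_add hκt hβ₁t, ENNReal.toReal_add hκt hβ₂t]
  have hb1 : (β₁ (B ∩ E)).toReal ≤ (γ^q).toReal := ENNReal.toReal_mono hγqtop hβ₁le
  have hb2 : (β₂ (B ∩ E)).toReal ≤ (γ^q).toReal := ENNReal.toReal_mono hγqtop hβ₂le
  have hγval : (γ^q).toReal = (1 - c₁*c₂)^q := by
    rw [hγr, ← ENNReal.ofReal_pow (by linarith), ENNReal.toReal_ofReal (pow_nonneg (by linarith) q)]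
  have hnn1 : 0 ≤ (β₁ (B ∩ E)).toReal := ENNReal.toReal_nonneg
  have hnn2 : 0 ≤ (β₂ (B ∩ E)).toReal := ENNReal.toReal_nonneg
  have habs2 : |(κ (B ∩ E)).toReal + (β₁ (B ∩ E)).toReal -
      ((κ (B ∩ E)).toReal + (β₂ (B ∩ E)).toReal)| ≤ (1 - c₁*c₂)^q := by
    rw [abs_sub_le_iff]
    constructor <;> · rw [← hγval]; linarith
  refine le_trans habs2 ?_
  have hpq : (0:ℝ) ≤ (1 - c₁*c₂)^q := pow_nonneg (by linarith) q
  linarith
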